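/- Let k > 0, let x ∈ ℝ³, and let d ∈ ℝ³ with ‖d‖ = 1. Then, as r → ∞, r·exp(−𝐢kr)·exp(𝐢k‖x − r·d‖)/(4π‖x − r·d‖) converges to (1/(4π))·exp(−𝐢k⟪x,d⟫). That is, the conjugated Green's function conj(G(x,y)) = exp(𝐢k‖x−y‖)/(4π‖x−y‖) satisfies lim_{r→∞} r·e^{−𝐢kr}·conj(G(x, r·d)) = conj(G^∞(x,d)) along each ray y = r·d, where G^∞(x,d) = (1/(4π))·exp(𝐢k⟪x,d⟫) is the far-field pattern of the Green's function. -/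

import Mathlib

open scoped RealInnerProductSpace

noncomputable section

/-- Far-field limit of the conjugated Helmholtz Green's function along a ray `y = r • d`:
`r · e^{-𝐢 k r} · exp(𝐢 k ‖x - r d‖)/(4π ‖x - r d‖) → (1/(4π)) · exp(-𝐢 k ⟪x, d⟫)`
as `r → ∞`. -/
theorem conjG_farfield_limit
    (k : ℝ) (hk : 0 < k) (x d : EuclideanSpace ℝ (Fin 3)) (hd : ‖d‖ = 1) :
    Filter.Tendsto
      (fun r : ℝ =>
        (r : ℂ) * Complex.exp (-(Complex.I * (k : ℂ) * (r : ℂ))) *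
          (Complex.exp (Complex.I * (k : ℂ) * (‖x - r • d‖ : ℂ)) /
            (4 * (Real.pi : ℂ) * (‖x - r • d‖ : ℂ))))
      Filter.atTop
      (nhds ((1 / (4 * (Real.pi : ℂ))) * Complex.exp (-(Complex.I * (k : ℂ) * (⟪x, d⟫ : ℂ))))) := by
  set f : ℝ → ℝ := fun r => ‖x - r • d‖ with hf
  -- norm of rescaled direction tends to 1
  have hq : Filter.Tendsto (fun r : ℝ => ‖r⁻¹ • x - d‖) Filter.atTop (nhds 1) := by
    have h0 : Filter.Tendsto (fun r : ℝ => r⁻¹ • x - d) Filter.atTop (nhds (0 - d)) := by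
      refine Filter.Tendsto.sub ?_ tendsto_const_nhds
      have := tendsto_inv_atTop_zero (𝕜 := ℝ)
      simpa using this.smul_const x
    have := (continuous_norm.tendsto (0 - d)).comp h0
    simpa [hd, Function.comp_def] using this
  -- eventually r is large
  have hev : ∀ᶠ r : ℝ in Filter.atTop, ‖x‖ + 1 ≤ r := Filter.eventually_ge_atTop _
  -- basic facts for large r
  have hkey : ∀ r : ℝ, ‖x‖ + 1 ≤ r →
      0 < r ∧ 0 < f r ∧ ‖r⁻¹ • x - d‖ = f r / r ∧
      f r ^ 2 = ‖x‖ ^ 2 - 2 * r * ⟪x, d⟫ + r ^ 2 := by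
    intro r hr
    have hx0 : 0 ≤ ‖x‖ := norm_nonneg x
    have hr0 : 0 < r := by linarith
    have hfr : 0 < f r := by
      have h1 : ‖r • d‖ - ‖x‖ ≤ ‖r • d - x‖ := by
        have := norm_sub_norm_le (r • d) x
        linarith [abs_le.mp (abs_norm_sub_norm_le (r • d) x)]
      have h2 : ‖r • d‖ = r := by
        rw [norm_smul, hd]; simp [abs_of_pos hr0]
      have h3 : ‖r • d - x‖ = f r := by rw [hf]; exact (norm_sub_rev _ _)
      rw [h2, h3] at h1
      linarith
    refine ⟨hr0, hfr, ?_, ?_⟩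
    · have : r⁻¹ • x - d = r⁻¹ • (x - r • d) := by
        rw [smul_sub, smul_smul, inv_mul_cancel₀ hr0.ne', one_smul]
      rw [this, norm_smul, norm_inv, Real.norm_eq_abs, abs_of_pos hr0]
      rw [hf]; ring
    · have := @norm_sub_sq_real (EuclideanSpace ℝ (Fin 3)) _ _ x (r • d)
      rw [real_inner_smul_right, norm_smul, hd, Real.norm_eq_abs,
        abs_of_pos hr0] at this
      rw [hf, this]; ring
  -- limit of f r - r
  have hdiff : Filter.Tendsto (fun r : ℝ => f r - r) Filter.atTop (nhds (-⟪x, d⟫)) := by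
    have haux : Filter.Tendsto
        (fun r : ℝ => (‖x‖ ^ 2 / r - 2 * ⟪x, d⟫) / (‖r⁻¹ • x - d‖ + 1))
        Filter.atTop (nhds ((0 - 2 * ⟪x, d⟫) / (1 + 1))) := by
      refine Filter.Tendsto.div ?_ (hq.add tendsto_const_nhds) (by norm_num)
      exact (tendsto_const_nhds.div_atTop Filter.tendsto_id).sub tendsto_const_nhds
    have haux' : Filter.Tendsto
        (fun r : ℝ => (‖x‖ ^ 2 / r - 2 * ⟪x, d⟫) / (‖r⁻¹ • x - d‖ + 1))
        Filter.atTop (nhds (-⟪x, d⟫)) := by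
      convert haux using 2; ring
    refine haux'.congr' ?_
    filter_upwards [hev] with r hr
    obtain ⟨hr0, hfr, hnorm, hsq⟩ := hkey r hr
    rw [hnorm]
    have hfr2 : f r + r ≠ 0 := by positivity
    set c : ℝ := ⟪x, d⟫ with hc
    field_simp
    nlinarith [hsq]
  -- limit of r / f r
  have hratio : Filter.Tendsto (fun r : ℝ => r / f r) Filter.atTop (nhds 1) := by
    have : Filter.Tendsto (fun r : ℝ => ‖r⁻¹ • x - d‖⁻¹) Filter.atTop (nhds 1⁻¹) :=
      hq.inv₀ (by norm_num)
    rw [inv_one] at this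
    refine this.congr' ?_
    filter_upwards [hev] with r hr
    obtain ⟨hr0, hfr, hnorm, _⟩ := hkey r hr
    rw [hnorm, inv_div]
  -- complex assembly
  have hA : Filter.Tendsto (fun r : ℝ => ((r : ℂ) / ((f r : ℝ) : ℂ))) Filter.atTop (nhds 1) := by
    have := (Complex.continuous_ofReal.tendsto 1).comp hratio
    simpa [Function.comp_def] using this
  have hB : Filter.Tendsto
      (fun r : ℝ => Complex.exp (Complex.I * (k : ℂ) * ((f r - r : ℝ) : ℂ)))
      Filter.atTop (nhds (Complex.exp (Complex.I * (k : ℂ) * ((-⟪x, d⟫ : ℝ) : ℂ)))) := by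
    have hc : Continuous fun t : ℝ => Complex.exp (Complex.I * (k : ℂ) * (t : ℂ)) := by
      exact Complex.continuous_exp.comp (by continuity)
    exact (hc.tendsto _).comp hdiff
  have hfinal := (hA.mul hB).mul
      (tendsto_const_nhds (x := (1 / (4 * (Real.pi : ℂ)))) (f := Filter.atTop))
  have hval : (1 : ℂ) * Complex.exp (Complex.I * (k : ℂ) * ((-⟪x, d⟫ : ℝ) : ℂ)) *
      (1 / (4 * (Real.pi : ℂ))) =
      (1 / (4 * (Real.pi : ℂ))) * Complex.exp (-(Complex.I * (k : ℂ) * (⟪x, d⟫ : ℂ))) := by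
    push_cast
    ring_nf
  rw [hval] at hfinal
  refine hfinal.congr' ?_
  filter_upwards [hev] with r hr
  obtain ⟨hr0, hfr, _, _⟩ := hkey r hr
  have hπ : (Real.pi : ℂ) ≠ 0 := by exact_mod_cast Real.pi_ne_zero
  have hfC : ((f r : ℝ) : ℂ) ≠ 0 := by exact_mod_cast hfr.ne'
  show ((r : ℂ) / ((f r : ℝ) : ℂ)) * Complex.exp (Complex.I * (k : ℂ) * ((f r - r : ℝ) : ℂ)) *
      (1 / (4 * (Real.pi : ℂ))) = (r : ℂ) * Complex.exp (-(Complex.I * (k : ℂ) * (r : ℂ))) *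
        (Complex.exp (Complex.I * (k : ℂ) * ((f r : ℝ) : ℂ)) /
          (4 * (Real.pi : ℂ) * ((f r : ℝ) : ℂ)))
  push_cast
  rw [show Complex.I * (k : ℂ) * ((f r : ℂ) - (r : ℂ)) =
      Complex.I * (k : ℂ) * (f r : ℂ) + (-(Complex.I * (k : ℂ) * (r : ℂ))) by ring,
    Complex.exp_add]
  field_simp
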